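/- For $0 < T \le 2$, the supremum of $\|f'\|_\infty$ over all $f \in \mathcal{L}_2(T)$ equals $2/T + T/2$, and it is attained by the function $f(t) = -t^2/2 + (2/T + T/2)t - 1$. -/

import Mathlib

open Set
open intervalIntegral

/-- Membership in Landau's class `𝓛₂(T)`. -/
def InL2 (T : ℝ) (f f' : ℝ → ℝ) : Prop :=
  (∀ t ∈ Icc 0 T, HasDerivWithinAt f (f' t) (Icc 0 T) t) ∧
  (∀ t ∈ Icc 0 T, |f t| ≤ 1) ∧
  LipschitzOnWith 1 f' (Icc 0 T)

lemma abs_int : ∀ (x T : ℝ), x ∈ Icc (0:ℝ) T → ∫ t in (0:ℝ)..T, |t - x| = x^2/2 + (T-x)^2/2 := by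
  intro x T hx
  obtain ⟨hx0, hxT⟩ := hx
  have hc : ∀ a b : ℝ, IntervalIntegrable (fun t => |t - x|) MeasureTheory.volume a b :=
    fun a b => (continuous_abs.comp (continuous_id.sub continuous_const)).intervalIntegrable a b
  rw [← integral_add_adjacent_intervals (hc 0 x) (hc x T)]
  have h1 : ∫ t in (0:ℝ)..x, |t - x| = ∫ t in (0:ℝ)..x, (x - t) := by
    apply integral_congr
    intro t ht
    rw [uIcc_of_le hx0] at ht
    show |t - x| = x - t
    rw [abs_of_nonpos (by linarith [ht.2]), neg_sub]
  have h2 : ∫ t in x..T, |t - x| = ∫ t in x..T, (t - x) := by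
    apply integral_congr
    intro t ht
    rw [uIcc_of_le hxT] at ht
    show |t - x| = t - x
    rw [abs_of_nonneg (by linarith [ht.1])]
  rw [h1, h2]
  rw [integral_sub (intervalIntegrable_const) (intervalIntegrable_id),
      integral_sub (intervalIntegrable_id) (intervalIntegrable_const)]
  simp [integral_id, smul_eq_mul]
  ring

lemma key (T : ℝ) (hT0 : 0 < T) (f f' : ℝ → ℝ) (h : InL2 T f f') (x : ℝ)
    (hx : x ∈ Icc 0 T) : |f' x| ≤ 2 / T + T / 2 := by
  obtain ⟨hderiv, hbound, hlip⟩ := h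
  have hcont : ContinuousOn f (Icc 0 T) := fun t ht => (hderiv t ht).continuousWithinAt
  have hcont' : ContinuousOn f' (Icc 0 T) := hlip.continuousOn
  have hint : IntervalIntegrable f' MeasureTheory.volume 0 T := by
    have h : ContinuousOn f' (uIcc 0 T) := by rwa [uIcc_of_le hT0.le]
    exact h.intervalIntegrable
  have hftc : ∫ t in (0:ℝ)..T, f' t = f T - f 0 :=
    integral_eq_sub_of_hasDeriv_right_of_le hT0.le hcont
      (fun t ht => ((hderiv t (Ioo_subset_Icc_self ht)).hasDerivAt
        (Icc_mem_nhds ht.1 ht.2)).hasDerivWithinAt) hint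
  have hpt : ∀ t ∈ Icc (0:ℝ) T, |f' t - f' x| ≤ |t - x| := by
    intro t ht
    have := hlip.dist_le_mul t ht x hx
    simpa [Real.dist_eq] using this
  have habs := abs_int x T hx
  have hca : IntervalIntegrable (fun t => |t - x|) MeasureTheory.volume 0 T :=
    (continuous_abs.comp (continuous_id.sub continuous_const)).intervalIntegrable 0 T
  have hlow : ∫ t in (0:ℝ)..T, (f' x - |t - x|) ≤ ∫ t in (0:ℝ)..T, f' t := by
    apply integral_mono_on hT0.le (intervalIntegrable_const.sub hca) hint
    intro t ht
    have := hpt t ht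
    have := abs_le.mp this
    linarith [this.1, abs_le.mp (le_refl |t - x|)]
  have hhigh : ∫ t in (0:ℝ)..T, f' t ≤ ∫ t in (0:ℝ)..T, (f' x + |t - x|) := by
    apply integral_mono_on hT0.le hint (intervalIntegrable_const.add hca)
    intro t ht
    have := abs_le.mp (hpt t ht)
    linarith [this.2]
  have hsub : ∫ t in (0:ℝ)..T, (f' x - |t - x|) = T * f' x - (x^2/2 + (T-x)^2/2) := by
    rw [integral_sub intervalIntegrable_const hca, habs,
        integral_const, smul_eq_mul]
    ring
  have hadd : ∫ t in (0:ℝ)..T, (f' x + |t - x|) = T * f' x + (x^2/2 + (T-x)^2/2) := by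
    rw [integral_add intervalIntegrable_const hca, habs,
        integral_const, smul_eq_mul]
    ring
  have hf2 : f T - f 0 ≤ 2 ∧ -2 ≤ f T - f 0 := by
    have h1 := abs_le.mp (hbound T ⟨hT0.le, le_refl T⟩)
    have h2 := abs_le.mp (hbound 0 ⟨le_refl 0, hT0.le⟩)
    constructor <;> linarith [h1.1, h1.2, h2.1, h2.2]
  rw [hsub] at hlow; rw [hadd] at hhigh; rw [hftc] at hlow hhigh
  have hq : x^2/2 + (T-x)^2/2 ≤ T^2/2 := by nlinarith [hx.1, hx.2, mul_nonneg hx.1 (sub_nonneg.mpr hx.2)]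
  have hdiv : 2 / T * T = 2 := div_mul_cancel₀ 2 hT0.ne'
  rw [abs_le]
  constructor
  · nlinarith [hf2.2, hq, hlow, hhigh]
  · nlinarith [hf2.1, hq, hlow]

/-- For `0 < T ≤ 2`, `sup_{f ∈ 𝓛₂(T)} ‖f'‖_∞ = 2/T + T/2`, attained by
`f(t) = -t²/2 + (2/T + T/2)t - 1`. -/
theorem landau_sup_small_T (T : ℝ) (hT0 : 0 < T) (hT2 : T ≤ 2) :
    IsGreatest {y : ℝ | ∃ f f' : ℝ → ℝ, InL2 T f f' ∧
        ∃ x ∈ Icc 0 T, y = |f' x|} (2 / T + T / 2) ∧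
    InL2 T (fun t => -t ^ 2 / 2 + (2 / T + T / 2) * t - 1)
        (fun t => -t + (2 / T + T / 2)) ∧
    |(fun t : ℝ => -t + (2 / T + T / 2)) 0| = 2 / T + T / 2 := by
  set C : ℝ := 2 / T + T / 2 with hC
  have hu : 2 / T * T = 2 := div_mul_cancel₀ 2 hT0.ne'
  have hu0 : 0 < 2 / T := by positivity
  have hC0 : 0 < C := by positivity
  have hmem : InL2 T (fun t => -t ^ 2 / 2 + C * t - 1) (fun t => -t + C) := by
    refine ⟨?_, ?_, ?_⟩
    · intro t ht
      have h : HasDerivAt (fun t : ℝ => -t ^ 2 / 2 + C * t - 1) (-t + C) t := by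
        have h1 := (((hasDerivAt_pow 2 t).neg.div_const 2).add
          ((hasDerivAt_id t).const_mul C)).sub_const 1
        refine h1.congr_deriv ?_
        simp
        ring
      exact h.hasDerivWithinAt
    · intro t ht
      obtain ⟨ht0, htT⟩ := ht
      rw [abs_le]
      constructor
      · nlinarith [mul_nonneg ht0 (show (0:ℝ) ≤ C - t / 2 by nlinarith)]
      · have hCT : C * T = 2 + T ^ 2 / 2 := by
          rw [hC]; field_simp
        nlinarith [mul_nonneg (sub_nonneg.mpr htT) (show (0:ℝ) ≤ 2 - T * t / 2 by nlinarith),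
          mul_le_mul_of_nonneg_right (le_of_eq hCT) ht0]
    · apply LipschitzWith.lipschitzOnWith
      apply LipschitzWith.of_dist_le_mul
      intro a b
      rw [Real.dist_eq, Real.dist_eq, NNReal.coe_one, one_mul,
        show -a + C - (-b + C) = -(a - b) by ring, abs_neg]
  refine ⟨⟨⟨_, _, hmem, 0, ⟨le_refl 0, hT0.le⟩, ?_⟩, ?_⟩, hmem, ?_⟩
  · simp [abs_of_pos hC0]
  · rintro y ⟨f, f', h, x, hx, rfl⟩
    exact key T hT0 f f' h x hx
  · simp [abs_of_pos hC0]
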